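/- For L ≥ 2 and M ≥ 2, the M−1 unit vectors forming a regular (M−1)-simplex in Hilbert space (pairwise inner products −1/(M−1)) have the property that every L-tuple of distinct vectors has circumscribed radius at least √((L−1)/L) · √(M/(M−1)). Consequently, for spherical codes, M_L(ε) ≥ c₁/ε for some constant c₁ = c₁(L) > 0. -/

import Mathlib

open scoped RealInnerProductSpace


lemma radius_key {E : Type*} [NormedAddCommGroup E] [InnerProductSpace ℝ E]
    (L M : ℕ) (hL : 2 ≤ L) (hM : 2 ≤ M) (v : Fin M → E)
    (hv : ∀ i, ‖v i‖ = 1)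
    (hvv : ∀ i j, i ≠ j → ⟪v i, v j⟫ = -1 / ((M : ℝ) - 1))
    (w : Fin L → Fin M) (hw : Function.Injective w) :
    Real.sqrt (((L : ℝ) - 1) / L) * Real.sqrt ((M : ℝ) / ((M : ℝ) - 1))
      ≤ ⨅ y : E, ⨆ i, ‖v (w i) - y‖ := by
  haveI : Nonempty (Fin L) := ⟨⟨0, by omega⟩⟩
  have hL0 : (0:ℝ) < L := by positivity
  have hL2 : (2:ℝ) ≤ L := by exact_mod_cast hL
  have hM1 : (1:ℝ) < M := by exact_mod_cast hM
  have hM1' : (0:ℝ) < (M:ℝ) - 1 := by linarith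
  set x : Fin L → E := fun i => v (w i) with hx
  set s : E := ∑ i, x i with hs
  set b : ℝ := (((L : ℝ) - 1) / L) * ((M : ℝ) / ((M : ℝ) - 1)) with hb
  have hb0 : 0 ≤ b := by
    apply mul_nonneg (div_nonneg (by linarith) hL0.le)
    positivity
  -- norm of the sum squared
  have hss : ⟪s, s⟫ = (L:ℝ) + (L:ℝ) * ((L:ℝ) - 1) * (-1 / ((M:ℝ) - 1)) := by
    rw [hs, sum_inner]
    have key : ∀ i : Fin L, ⟪x i, ∑ j, x j⟫ = 1 + ((L:ℝ) - 1) * (-1 / ((M:ℝ) - 1)) := by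
      intro i
      rw [inner_sum]
      rw [← Finset.add_sum_erase _ _ (Finset.mem_univ i)]
      have h1 : ⟪x i, x i⟫ = 1 := by
        rw [real_inner_self_eq_norm_sq, hx]
        simp [hv]
      have h2 : ∀ j ∈ Finset.univ.erase i, ⟪x i, x j⟫ = -1 / ((M:ℝ) - 1) := by
        intro j hj
        have hji : j ≠ i := Finset.ne_of_mem_erase hj
        exact hvv _ _ (fun h => hji (hw h).symm)
      rw [Finset.sum_congr rfl h2, Finset.sum_const, h1,
        Finset.card_erase_of_mem (Finset.mem_univ i), Finset.card_univ,
        Fintype.card_fin, nsmul_eq_mul, Nat.cast_sub (by omega)]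
      push_cast
      ring
    rw [Finset.sum_congr rfl (fun i _ => key i), Finset.sum_const, Finset.card_univ,
      Fintype.card_fin, nsmul_eq_mul]
    ring
  have hbnd : ∀ y : E, ∃ i, b ≤ ‖x i - y‖ ^ 2 := by
    intro y
    by_contra h
    push_neg at h
    have hsum : ∑ i, ‖x i - y‖ ^ 2 < (L:ℝ) * b := by
      calc ∑ i, ‖x i - y‖ ^ 2 < ∑ _i : Fin L, b :=
            Finset.sum_lt_sum_of_nonempty Finset.univ_nonempty (fun i _ => h i)
        _ = (L:ℝ) * b := by
            rw [Finset.sum_const, Finset.card_univ, Fintype.card_fin, nsmul_eq_mul]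
    have hexp : ∑ i, ‖x i - y‖ ^ 2
        = (L:ℝ) - 2 * ⟪s, y⟫ + (L:ℝ) * ‖y‖ ^ 2 := by
      have h3 : ∀ i : Fin L, ‖x i - y‖ ^ 2 = 1 - 2 * ⟪x i, y⟫ + ‖y‖ ^ 2 := by
        intro i
        rw [norm_sub_sq_real]
        simp [hx, hv]
      rw [Finset.sum_congr rfl (fun i _ => h3 i)]
      rw [Finset.sum_add_distrib, Finset.sum_sub_distrib, ← Finset.mul_sum,
        ← sum_inner, Finset.sum_const, Finset.sum_const, Finset.card_univ,
        Fintype.card_fin, nsmul_eq_mul, nsmul_eq_mul]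
      ring_nf
      rw [hs]
    have hcs : ⟪s, y⟫ ≤ ‖s‖ * ‖y‖ := real_inner_le_norm s y
    have hns : ‖s‖ ^ 2 = (L:ℝ) + (L:ℝ) * ((L:ℝ) - 1) * (-1 / ((M:ℝ) - 1)) := by
      rw [← real_inner_self_eq_norm_sq, hss]
    have h1 : (L:ℝ)^2 - ‖s‖^2 ≤ (L:ℝ) * (∑ i, ‖x i - y‖ ^ 2) := by
      rw [hexp]
      nlinarith [sq_nonneg ((L:ℝ) * ‖y‖ - ‖s‖), hcs, hL0]
    have h2 : (L:ℝ)^2 - ‖s‖^2 = (L:ℝ) * ((L:ℝ) * b) := by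
      rw [hns, hb]
      field_simp
      ring
    have h4 : (L:ℝ) * ((L:ℝ) * b) ≤ (L:ℝ) * (∑ i, ‖x i - y‖ ^ 2) := h2 ▸ h1
    have := le_of_mul_le_mul_left h4 hL0
    linarith
  have hfin : ∀ y : E, Real.sqrt b ≤ ⨆ i, ‖x i - y‖ := by
    intro y
    obtain ⟨i, hi⟩ := hbnd y
    have h1 : Real.sqrt b ≤ ‖x i - y‖ := by
      have := Real.sqrt_le_sqrt hi
      rwa [Real.sqrt_sq (norm_nonneg _)] at this
    exact h1.trans (le_ciSup (f := fun i => ‖x i - y‖)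
      (Set.Finite.bddAbove (Set.finite_range _)) i)
  have hfin2 := le_ciInf hfin
  rwa [hb, Real.sqrt_mul (div_nonneg (by linarith) hL0.le)] at hfin2


noncomputable def simplexPts (M : ℕ) : Fin M → EuclideanSpace ℝ (Fin M) :=
  fun i => WithLp.toLp 2 (fun j => Real.sqrt ((M:ℝ)/((M:ℝ)-1)) * ((if j = i then 1 else 0) - 1/M))

lemma simplex_inner (M : ℕ) (hM : 2 ≤ M) (i j : Fin M) :
    ⟪simplexPts M i, simplexPts M j⟫ =
      if i = j then 1 else -1/((M:ℝ)-1) := by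
  have hM1 : (1:ℝ) < M := by exact_mod_cast hM
  have hM0 : (0:ℝ) < M := by linarith
  have hM1' : (0:ℝ) < (M:ℝ) - 1 := by linarith
  have hc2 : Real.sqrt ((M:ℝ)/((M:ℝ)-1)) ^ 2 = (M:ℝ)/((M:ℝ)-1) :=
    Real.sq_sqrt (by positivity)
  set c : ℝ := Real.sqrt ((M:ℝ)/((M:ℝ)-1)) with hc
  have hsum : ⟪simplexPts M i, simplexPts M j⟫
      = ∑ k : Fin M, (c * ((if k = i then (1:ℝ) else 0) - 1/M))
          * (c * ((if k = j then (1:ℝ) else 0) - 1/M)) := by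
    simp only [simplexPts, PiLp.inner_apply, PiLp.toLp_apply, RCLike.inner_apply, conj_trivial]
    exact Finset.sum_congr rfl (fun k _ => by ring)
  rw [hsum]
  have hterm : ∀ k : Fin M,
      (c * ((if k = i then (1:ℝ) else 0) - 1/M)) * (c * ((if k = j then (1:ℝ) else 0) - 1/M))
      = c^2 * ((if k = i then (1:ℝ) else 0) * (if k = j then (1:ℝ) else 0))
        - c^2 * (1/M) * (if k = i then (1:ℝ) else 0)
        - c^2 * (1/M) * (if k = j then (1:ℝ) else 0)
        + c^2 * (1/M^2) := by
    intro k; ring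
  rw [Finset.sum_congr rfl (fun k _ => hterm k)]
  rw [Finset.sum_add_distrib, Finset.sum_sub_distrib, Finset.sum_sub_distrib,
    ← Finset.mul_sum, ← Finset.mul_sum, ← Finset.mul_sum]
  have e1 : ∑ k : Fin M, (if k = i then (1:ℝ) else 0) * (if k = j then (1:ℝ) else 0)
      = if i = j then 1 else 0 := by
    simp [ite_and, Finset.sum_ite_eq', eq_comm]
  have e2 : ∀ a : Fin M, ∑ k : Fin M, (if k = a then (1:ℝ) else 0) = 1 := by
    intro a; simp
  rw [e1, e2 i, e2 j, Finset.sum_const, Finset.card_univ, Fintype.card_fin,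
    nsmul_eq_mul]
  by_cases h : i = j
  · simp only [h, if_pos rfl, if_pos]
    rw [hc2]
    field_simp
    ring
  · rw [if_neg h, if_neg h]
    rw [hc2]
    field_simp
    ring

lemma simplex_norm (M : ℕ) (hM : 2 ≤ M) (i : Fin M) : ‖simplexPts M i‖ = 1 := by
  have h := simplex_inner M hM i i
  rw [if_pos rfl, real_inner_self_eq_norm_sq] at h
  nlinarith [norm_nonneg (simplexPts M i)]

lemma simplex_inj (M : ℕ) (hM : 2 ≤ M) : Function.Injective (simplexPts M) := by
  intro i j hij
  by_contra hne
  have h1 := simplex_inner M hM i j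
  rw [if_neg hne, hij] at h1
  have h2 := simplex_inner M hM j j
  rw [if_pos rfl] at h2
  have hM1' : (0:ℝ) < (M:ℝ) - 1 := by
    have : (1:ℝ) < M := by exact_mod_cast hM
    linarith
  rw [h2] at h1
  have h3 : -1/((M:ℝ)-1) < 0 := by
    apply div_neg_of_neg_of_pos <;> linarith
  linarith


/-- the unit vectors of a regular simplex (pairwise inner products
`-1/(M-1)`) have every `L`-tuple of distinct vectors of circumscribed radius at
least `√((L-1)/L)·√(M/(M-1))`; consequently for spherical codes
`M_L(ε) ≥ c₁/ε`. -/
theorem stmt_15 (L : ℕ) (hL : 2 ≤ L) :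
    (∀ (E : Type) [NormedAddCommGroup E] [InnerProductSpace ℝ E] (M : ℕ), 2 ≤ M →
      ∀ v : Fin M → E, (∀ i, ‖v i‖ = 1) →
        (∀ i j, i ≠ j → ⟪v i, v j⟫ = -1 / ((M : ℝ) - 1)) →
        ∀ w : Fin L → Fin M, Function.Injective w →
          Real.sqrt (((L : ℝ) - 1) / L) * Real.sqrt ((M : ℝ) / ((M : ℝ) - 1))
            ≤ ⨅ y : E, ⨆ i, ‖v (w i) - y‖) ∧
    (∃ c₁ : ℝ, 0 < c₁ ∧ ∀ ε : ℝ, 0 < ε →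
      ∃ (n : ℕ) (C : Finset (EuclideanSpace ℝ (Fin n))),
        (∀ c ∈ C, ‖c‖ = 1) ∧
        (∀ w : Fin L → EuclideanSpace ℝ (Fin n), (∀ i, w i ∈ C) →
          Function.Injective w →
            Real.sqrt (((L : ℝ) - 1) / L) + ε ≤ ⨅ y, ⨆ i, ‖w i - y‖) ∧
        c₁ / ε ≤ C.card) := by

  have hL2 : (2:ℝ) ≤ L := by exact_mod_cast hL
  classical
  constructor
  · intro E _ _ M hM v hv hvv w hw
    exact radius_key L M hL hM v hv hvv w hw
  set t : ℝ := Real.sqrt (((L : ℝ) - 1) / L) with htdef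
  have ht0 : 0 < t := Real.sqrt_pos.mpr (div_pos (by linarith) (by linarith))
  refine ⟨t / 6, by positivity, ?_⟩
  intro ε hε
  by_cases hcase : t / 6 ≤ ε
  · -- large ε: a singleton code works vacuously
    refine ⟨1, {EuclideanSpace.single 0 1}, ?_, ?_, ?_⟩
    · intro c hc
      rw [Finset.mem_singleton] at hc
      rw [hc, EuclideanSpace.norm_single]
      simp
    · intro w hwC hw
      exfalso
      have h0 := hwC ⟨0, by omega⟩
      have h1 := hwC ⟨1, by omega⟩
      rw [Finset.mem_singleton] at h0 h1
      have := hw (h0.trans h1.symm)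
      simp [Fin.ext_iff] at this
    · rw [Finset.card_singleton]
      push_cast
      rw [div_le_one hε]
      linarith
  · push_neg at hcase
    have hgt : 1 < t / (6 * ε) := by
      rw [lt_div_iff₀ (by positivity)]
      linarith
    set M : ℕ := ⌈t / (6 * ε)⌉₊ + 1 with hMdef
    have hceil1 : 1 ≤ ⌈t / (6 * ε)⌉₊ := Nat.ceil_pos.mpr (by positivity)
    have hM2 : 2 ≤ M := by omega
    have hM1 : (2:ℝ) ≤ M := by exact_mod_cast hM2
    have hm1 : (1:ℝ) ≤ (M:ℝ) - 1 := by linarith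
    have hMreal : t / (6 * ε) ≤ (M:ℝ) := by
      calc t / (6 * ε) ≤ (⌈t / (6 * ε)⌉₊ : ℝ) := Nat.le_ceil _
        _ ≤ (M:ℝ) := by rw [hMdef]; push_cast; linarith
    have hMm1 : (M:ℝ) - 1 ≤ t / (3 * ε) := by
      have h1 : ((⌈t / (6 * ε)⌉₊ : ℕ) : ℝ) < t / (6 * ε) + 1 :=
        Nat.ceil_lt_add_one (by positivity)
      have h2 : (M:ℝ) - 1 = (⌈t / (6 * ε)⌉₊ : ℝ) := by rw [hMdef]; push_cast; ring
      have h3 : t / (3 * ε) = 2 * (t / (6 * ε)) := by ring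
      rw [h2, h3]
      linarith
    have hεle : ε ≤ t / (3 * ((M:ℝ) - 1)) := by
      rw [le_div_iff₀ (by linarith)]
      have := (le_div_iff₀ (by positivity : (0:ℝ) < 3 * ε)).mp hMm1
      linarith
    refine ⟨M, Finset.image (simplexPts M) Finset.univ, ?_, ?_, ?_⟩
    · intro c hc
      rw [Finset.mem_image] at hc
      obtain ⟨i, _, rfl⟩ := hc
      exact simplex_norm M hM2 i
    · intro w hwC hw
      have hex : ∀ i, ∃ m : Fin M, simplexPts M m = w i := by
        intro i
        have := hwC i
        rw [Finset.mem_image] at this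
        obtain ⟨m, _, hm⟩ := this
        exact ⟨m, hm⟩
      choose g hg using hex
      have hginj : Function.Injective g := by
        intro a b hab
        exact hw (by rw [← hg a, ← hg b, hab])
      have hip : ∀ i j : Fin M, i ≠ j →
          ⟪simplexPts M i, simplexPts M j⟫ = -1 / ((M:ℝ) - 1) := by
        intro i j hij
        rw [simplex_inner M hM2, if_neg hij]
      have key := radius_key L M hL hM2 (simplexPts M) (simplex_norm M hM2) hip g hginj
      simp only [hg] at key
      refine le_trans ?_ key
      -- arithmetic: t + ε ≤ t * √(M/(M-1))
      have hm0 : (0:ℝ) < (M:ℝ) - 1 := by linarith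
      have hsq : 1 + 1 / (3 * ((M:ℝ) - 1)) ≤ Real.sqrt ((M:ℝ) / ((M:ℝ) - 1)) := by
        rw [Real.le_sqrt (by positivity) (by positivity), le_div_iff₀ hm0]
        have h9 : 1 / (9 * ((M:ℝ) - 1)) ≤ 1 / 9 := by
          apply div_le_div_of_nonneg_left (by norm_num) (by norm_num)
          linarith
        have hexp : (1 + 1 / (3 * ((M:ℝ) - 1))) ^ 2 * ((M:ℝ) - 1)
            = ((M:ℝ) - 1) + 2/3 + 1 / (9 * ((M:ℝ) - 1)) := by
          field_simp
          ring
        rw [hexp]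
        linarith
      calc t + ε ≤ t + t / (3 * ((M:ℝ) - 1)) := by linarith
        _ = t * (1 + 1 / (3 * ((M:ℝ) - 1))) := by field_simp
        _ ≤ t * Real.sqrt ((M:ℝ) / ((M:ℝ) - 1)) :=
            mul_le_mul_of_nonneg_left hsq ht0.le
    · rw [Finset.card_image_of_injective _ (simplex_inj M hM2), Finset.card_univ,
        Fintype.card_fin]
      calc t / 6 / ε = t / (6 * ε) := by ring
        _ ≤ (M:ℝ) := hMreal
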